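/- As an identity of formal power series in four variables z₀, z₁, w₀, w₁: the sum over all pairs (λ, μ) of partitions of z₀^{o(λ)} z₁^{e(λ)} w₀^{o(μ)} w₁^{e(μ)}, specialized at z₀ = w₁ = x and z₁ = w₀ = y, equals ∏_{i=1}^{∞} (1 − (xy)^i)^{−2} (1 − x(xy)^{i−1})^{−1} (1 − y(xy)^{i−1})^{−1}. Equivalently, Σ_{(λ,μ)} x^{o(λ)+e(μ)} y^{e(λ)+o(μ)} = ∏_{i=1}^{∞} (1 − (xy)^i)^{−2} (1 − x(xy)^{i−1})^{−1} (1 − y(xy)^{i−1})^{−1}. -/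

import Mathlib

/-- A partition: a weakly decreasing sequence of nonnegative integers with
finitely many nonzero terms. -/
structure CPartition where
  parts : ℕ → ℕ
  antitone : Antitone parts
  finite_support : Set.Finite {i : ℕ | parts i ≠ 0}

/-- The conjugate partition: `λ'_j = #{i : λ_i ≥ j}` (columns indexed from 1). -/
noncomputable def CPartition.conj (lam : CPartition) (j : ℕ) : ℕ :=
  Nat.card {i : ℕ | j ≤ lam.parts i}

/-- `o(λ) = Σ_{j odd} λ'_j`, the number of boxes of `λ` in odd-indexed columns. -/
noncomputable def CPartition.oddCols (lam : CPartition) : ℕ :=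
  ∑' j : ℕ, if Odd j then lam.conj j else 0

/-- `e(λ) = Σ_{j even, j ≥ 2} λ'_j`, the number of boxes of `λ` in even-indexed
columns. -/
noncomputable def CPartition.evenCols (lam : CPartition) : ℕ :=
  ∑' j : ℕ, if Even j ∧ j ≠ 0 then lam.conj j else 0

namespace CPartition

lemma ext' {p q : CPartition} (h : p.parts = q.parts) : p = q := by
  cases p; cases q; simpa using h

lemma parts_le (lam : CPartition) (i : ℕ) : lam.parts i ≤ lam.parts 0 :=
  lam.antitone (Nat.zero_le i)

lemma lowerSet_eq_Iio {S : Set ℕ} (hfin : S.Finite)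
    (hlow : ∀ a b : ℕ, a ≤ b → b ∈ S → a ∈ S) : S = Set.Iio (Nat.card S) := by
  have hcard : Nat.card S = S.ncard := Nat.card_coe_set_eq S
  ext i
  simp only [Set.mem_Iio, hcard]
  constructor
  · intro hi
    have hsub : Set.Iic i ⊆ S := fun a ha => hlow a i ha hi
    have h1 : (Set.Iic i).ncard ≤ S.ncard := Set.ncard_le_ncard hsub hfin
    have h2 : (Set.Iic i).ncard = i + 1 := by
      rw [← Finset.coe_Iic, Set.ncard_coe_finset, Nat.card_Iic]
    omega
  · intro hi
    by_contra h
    have hsub : S ⊆ Set.Iio i := by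
      intro b hb
      simp only [Set.mem_Iio]
      by_contra hbi
      exact h (hlow i b (le_of_not_gt hbi) hb)
    have h1 : S.ncard ≤ (Set.Iio i).ncard := by
      apply Set.ncard_le_ncard hsub (Set.finite_Iio i)
    have h2 : (Set.Iio i).ncard = i := by
      rw [← Finset.coe_Iio, Set.ncard_coe_finset, Nat.card_Iio]
    omega

lemma finite_ge (lam : CPartition) {k : ℕ} (hk : 1 ≤ k) :
    {i : ℕ | k ≤ lam.parts i}.Finite :=
  lam.finite_support.subset (fun i hi => by simp only [Set.mem_setOf_eq] at hi ⊢; omega)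

lemma setOf_ge_eq (lam : CPartition) {k : ℕ} (hk : 1 ≤ k) :
    {i : ℕ | k ≤ lam.parts i} = Set.Iio (lam.conj k) :=
  lowerSet_eq_Iio (lam.finite_ge hk)
    (fun a b hab hb => le_trans hb (lam.antitone hab))

lemma lt_conj_iff (lam : CPartition) {k : ℕ} (hk : 1 ≤ k) (i : ℕ) :
    i < lam.conj k ↔ k ≤ lam.parts i := by
  have := lam.setOf_ge_eq hk
  constructor
  · intro h
    have : i ∈ {i : ℕ | k ≤ lam.parts i} := this ▸ h
    exact this
  · intro h
    have h2 : i ∈ {i : ℕ | k ≤ lam.parts i} := h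
    rw [this] at h2; exact h2

lemma conj_anti (lam : CPartition) {k l : ℕ} (hk : 1 ≤ k) (hkl : k ≤ l) :
    lam.conj l ≤ lam.conj k := by
  rcases Nat.eq_zero_or_pos (lam.conj l) with h | h
  · omega
  · have : lam.conj l - 1 < lam.conj l := by omega
    rw [lt_conj_iff lam (by omega)] at this
    have : lam.conj l - 1 < lam.conj k := by
      rw [lt_conj_iff lam hk]; omega
    omega

lemma conj_eq_zero (lam : CPartition) {k : ℕ} (hk : lam.parts 0 < k) : lam.conj k = 0 := by
  have : {i : ℕ | k ≤ lam.parts i} = ∅ := by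
    ext i; simp only [Set.mem_setOf_eq, Set.mem_empty_iff_false, iff_false, not_le]
    exact lt_of_le_of_lt (lam.parts_le i) hk
  rw [CPartition.conj, this]; simp

noncomputable def toD (lam : CPartition) : ℕ →₀ ℕ :=
  Finsupp.onFinset (Finset.Icc 1 (lam.parts 0)) (fun k => lam.conj k - lam.conj (k + 1))
    (by
      intro k hk
      simp only [Finset.mem_Icc]
      by_contra hcon
      rcases not_and_or.mp hcon with h | h
      · -- k = 0
        have hk0 : k = 0 := by omega
        subst hk0
        have : lam.conj 0 = 0 := by
          have : {i : ℕ | 0 ≤ lam.parts i} = Set.univ := by ext i; simp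
          rw [CPartition.conj, this]; simp
        omega
      · have h1 : lam.conj k = 0 := lam.conj_eq_zero (by omega)
        omega)

lemma toD_apply (lam : CPartition) (k : ℕ) :
    lam.toD k = lam.conj k - lam.conj (k + 1) := rfl

lemma toD_zero (lam : CPartition) : lam.toD 0 = 0 := by
  rw [toD_apply]
  have : lam.conj 0 = 0 := by
    have h : {i : ℕ | 0 ≤ lam.parts i} = Set.univ := by ext i; simp
    rw [CPartition.conj, h]; simp
  omega

lemma toD_support_subset (lam : CPartition) :
    lam.toD.support ⊆ Finset.Icc 1 (lam.parts 0) :=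
  Finsupp.support_onFinset_subset

lemma conj_succ_add (lam : CPartition) {k : ℕ} (hk : 1 ≤ k) :
    lam.conj k = lam.toD k + lam.conj (k + 1) := by
  have := lam.conj_anti hk (show k ≤ k + 1 by omega)
  rw [toD_apply]; omega

lemma conj_eq_sum_aux (lam : CPartition) (n : ℕ) :
    ∀ k, 1 ≤ k → lam.conj k = (∑ j ∈ Finset.Ico k (k + n), lam.toD j) + lam.conj (k + n) := by
  induction n with
  | zero => intro k hk; simp
  | succ n ih =>
    intro k hk
    rw [show k + (n+1) = (k+n) + 1 by omega, Finset.sum_Ico_succ_top (by omega),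
      add_assoc, ← conj_succ_add lam (show 1 ≤ k + n by omega), ← ih k hk]

lemma conj_eq_sum (lam : CPartition) {k B : ℕ} (hk : 1 ≤ k) (hB : lam.parts 0 ≤ B) :
    lam.conj k = ∑ j ∈ Finset.Icc k B, lam.toD j := by
  rcases le_or_gt k (B + 1) with h | h
  · have := lam.conj_eq_sum_aux (B + 1 - k) k hk
    rw [show k + (B + 1 - k) = B + 1 by omega] at this
    rw [lam.conj_eq_zero (k := B + 1) (by omega), add_zero] at this
    rw [this, Finset.Ico_add_one_right_eq_Icc]
  · rw [Finset.Icc_eq_empty (by omega), Finset.sum_empty, lam.conj_eq_zero (by omega)]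

end CPartition

namespace CPartition

lemma card_filter_odd (k : ℕ) :
    ((Finset.Icc 1 k).filter (fun j => Odd j)).card = (k + 1) / 2 := by
  induction k with
  | zero => simp
  | succ k ih =>
    rw [← Finset.insert_Icc_right_eq_Icc_add_one (by omega), Finset.filter_insert]
    by_cases h : Odd (k + 1)
    · rw [if_pos h, Finset.card_insert_of_notMem (by simp), ih]
      rw [Nat.odd_iff] at h; omega
    · rw [if_neg h, ih]
      rw [Nat.odd_iff] at h; omega

lemma card_filter_even (k : ℕ) :
    ((Finset.Icc 1 k).filter (fun j => Even j ∧ j ≠ 0)).card = k / 2 := by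
  induction k with
  | zero => simp
  | succ k ih =>
    rw [← Finset.insert_Icc_right_eq_Icc_add_one (by omega), Finset.filter_insert]
    by_cases h : Even (k + 1) ∧ k + 1 ≠ 0
    · rw [if_pos h, Finset.card_insert_of_notMem (by simp), ih]
      obtain ⟨h, -⟩ := h; rw [Nat.even_iff] at h; omega
    · rw [if_neg h, ih]
      have h' : ¬ Even (k+1) := fun he => h ⟨he, by omega⟩
      rw [Nat.even_iff] at h'; omega

/-- Weighted sums attached to a difference vector. -/
def oW (c : ℕ →₀ ℕ) : ℕ := c.sum fun k v => v * ((k + 1) / 2)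
def eW (c : ℕ →₀ ℕ) : ℕ := c.sum fun k v => v * (k / 2)

lemma cols_eq (p : ℕ → Prop) [DecidablePred p] (hp0 : ¬ p 0) (lam : CPartition) :
    (∑' j : ℕ, if p j then lam.conj j else 0) =
      ∑ k ∈ Finset.Icc 1 (lam.parts 0), lam.toD k * ((Finset.Icc 1 k).filter p).card := by
  set B := lam.parts 0 with hB
  rw [tsum_eq_sum (s := Finset.Icc 1 B) (by
    intro j hj
    simp only [Finset.mem_Icc, not_and, not_le] at hj
    by_cases hp : p j
    · rw [if_pos hp]
      rcases Nat.eq_zero_or_pos j with h | h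
      · exact absurd (h ▸ hp) hp0
      · exact lam.conj_eq_zero (hj h)
    · rw [if_neg hp])]
  have step : ∀ j ∈ Finset.Icc 1 B, (if p j then lam.conj j else 0) =
      ∑ k ∈ Finset.Icc 1 B, (if p j ∧ j ≤ k then lam.toD k else 0) := by
    intro j hj
    simp only [Finset.mem_Icc] at hj
    by_cases hp : p j
    · rw [if_pos hp, lam.conj_eq_sum hj.1 (le_refl _)]
      rw [show Finset.Icc j B = (Finset.Icc 1 B).filter (fun k => j ≤ k) by
        ext k; simp only [Finset.mem_Icc, Finset.mem_filter]; omega]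
      rw [Finset.sum_filter]
      exact Finset.sum_congr rfl (fun k _ => by simp [hp])
    · simp [hp]
  rw [Finset.sum_congr rfl step, Finset.sum_comm]
  apply Finset.sum_congr rfl
  intro k hk
  simp only [Finset.mem_Icc] at hk
  rw [← Finset.sum_filter, Finset.sum_const, smul_eq_mul, mul_comm]
  congr 2
  ext j
  simp only [Finset.mem_filter, Finset.mem_Icc]
  constructor
  · rintro ⟨⟨h1, _⟩, hp, h3⟩; exact ⟨⟨h1, h3⟩, hp⟩
  · rintro ⟨⟨h1, h3⟩, hp⟩; exact ⟨⟨h1, le_trans h3 hk.2⟩, hp, h3⟩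

lemma sum_weights_eq (lam : CPartition) (w : ℕ → ℕ) :
    (∑ k ∈ Finset.Icc 1 (lam.parts 0), lam.toD k * w k) = lam.toD.sum fun k v => v * w k := by
  rw [Finsupp.sum_of_support_subset _ lam.toD_support_subset _ (fun i _ => by simp)]

lemma oddCols_eq (lam : CPartition) : lam.oddCols = oW lam.toD := by
  rw [oddCols, cols_eq (fun j => Odd j) (by simp) lam,
    sum_weights_eq lam (fun k => ((Finset.Icc 1 k).filter (fun j => Odd j)).card), oW]
  exact Finsupp.sum_congr (fun k _ => by rw [card_filter_odd])

lemma evenCols_eq (lam : CPartition) : lam.evenCols = eW lam.toD := by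
  rw [evenCols, cols_eq (fun j => Even j ∧ j ≠ 0) (by simp) lam,
    sum_weights_eq lam (fun k => ((Finset.Icc 1 k).filter (fun j => Even j ∧ j ≠ 0)).card), eW]
  exact Finsupp.sum_congr (fun k _ => by rw [card_filter_even])

/-- tail sum of a finsupp from `k` on. -/
def tail (c : ℕ →₀ ℕ) (k : ℕ) : ℕ := ∑ j ∈ c.support.filter (fun j => k ≤ j), c j

lemma tail_anti (c : ℕ →₀ ℕ) {k l : ℕ} (hkl : k ≤ l) : tail c l ≤ tail c k :=
  Finset.sum_le_sum_of_subset
    (Finset.monotone_filter_right c.support (fun j _ (hj : l ≤ j) => le_trans hkl hj))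

lemma le_sup_of_tail_ne_zero {c : ℕ →₀ ℕ} {k : ℕ} (h : tail c k ≠ 0) :
    k ≤ c.support.sup id := by
  rw [tail] at h
  have : (c.support.filter (fun j => k ≤ j)).Nonempty := by
    by_contra hcon
    rw [Finset.not_nonempty_iff_eq_empty] at hcon
    rw [hcon] at h; simp at h
  obtain ⟨j, hj⟩ := this
  simp only [Finset.mem_filter] at hj
  exact le_trans hj.2 (Finset.le_sup (f := id) hj.1)

lemma tail_succ (c : ℕ →₀ ℕ) (k : ℕ) : tail c k = c k + tail c (k + 1) := by
  by_cases hk : k ∈ c.support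
  · have : c.support.filter (fun j => k ≤ j) =
        insert k (c.support.filter (fun j => k + 1 ≤ j)) := by
      ext j
      simp only [Finset.mem_filter, Finset.mem_insert]
      constructor
      · rintro ⟨h1, h2⟩
        rcases Nat.eq_or_lt_of_le h2 with h | h
        · exact Or.inl h.symm
        · exact Or.inr ⟨h1, h⟩
      · rintro (rfl | ⟨h1, h2⟩)
        · exact ⟨hk, le_refl _⟩
        · exact ⟨h1, by omega⟩
    rw [tail, this, Finset.sum_insert (by
      intro hmem
      simp only [Finset.mem_filter] at hmem
      omega), tail]
  · have hck : c k = 0 := by rwa [Finsupp.notMem_support_iff] at hk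
    have : c.support.filter (fun j => k ≤ j) = c.support.filter (fun j => k + 1 ≤ j) := by
      ext j
      simp only [Finset.mem_filter]
      constructor
      · rintro ⟨h1, h2⟩
        refine ⟨h1, ?_⟩
        rcases Nat.eq_or_lt_of_le h2 with h | h
        · exact absurd (h ▸ h1) hk
        · omega
      · rintro ⟨h1, h2⟩; exact ⟨h1, by omega⟩
    rw [tail, this, hck, zero_add, tail]

lemma tail_eq_sum_Icc (c : ℕ →₀ ℕ) {B : ℕ} (hsupp : ∀ j ∈ c.support, j ≤ B) (k : ℕ) :
    tail c k = ∑ j ∈ Finset.Icc k B, c j := by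
  rw [tail]
  apply Finset.sum_subset
  · intro j hj
    simp only [Finset.mem_filter] at hj
    simp only [Finset.mem_Icc]
    exact ⟨hj.2, hsupp j hj.1⟩
  · intro j hjt hj
    by_contra hc
    have hjs : j ∈ c.support := Finsupp.mem_support_iff.mpr hc
    simp only [Finset.mem_filter, not_and, not_le] at hj
    simp only [Finset.mem_Icc] at hjt
    have := hj hjs
    omega

/-- Reconstruct a partition from a difference vector. -/
noncomputable def fromD (c : ℕ →₀ ℕ) : CPartition where
  parts i := ((Finset.Icc 1 (c.support.sup id)).filter (fun k => i < tail c k)).card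
  antitone := by
    intro i i' h
    apply Finset.card_le_card
    exact Finset.monotone_filter_right _ (fun k _ (hk : i' < tail c k) => lt_of_le_of_lt h hk)
  finite_support := by
    apply (Set.finite_Iio (tail c 1)).subset
    intro i hi
    simp only [Set.mem_setOf_eq] at hi
    have : ((Finset.Icc 1 (c.support.sup id)).filter (fun k => i < tail c k)).Nonempty := by
      rwa [← Finset.card_pos, Nat.pos_iff_ne_zero]
    obtain ⟨k, hk⟩ := this
    simp only [Finset.mem_filter, Finset.mem_Icc] at hk
    have := tail_anti c hk.1.1
    simp only [Set.mem_Iio]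
    omega

lemma le_parts_fromD (c : ℕ →₀ ℕ) {k : ℕ} (hk : 1 ≤ k) (i : ℕ) :
    k ≤ (fromD c).parts i ↔ i < tail c k := by
  constructor
  · intro h
    set S := (Finset.Icc 1 (c.support.sup id)).filter (fun k => i < tail c k) with hS
    have hSne : S.Nonempty := by
      rw [← Finset.card_pos]
      change k ≤ S.card at h
      omega
    set M := S.max' hSne with hM
    have hMS : M ∈ S := S.max'_mem hSne
    have hsub : S ⊆ Finset.Icc 1 M := by
      intro s hs
      simp only [Finset.mem_Icc]
      have h1 : 1 ≤ s := by
        have := hs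
        simp only [hS, Finset.mem_filter, Finset.mem_Icc] at this
        exact this.1.1
      exact ⟨h1, S.le_max' s hs⟩
    have hcard : S.card ≤ M := by
      have := Finset.card_le_card hsub
      rwa [Nat.card_Icc, Nat.add_sub_cancel] at this
    have hkM : k ≤ M := le_trans h hcard
    simp only [hS, Finset.mem_filter, Finset.mem_Icc] at hMS
    calc i < tail c M := hMS.2
    _ ≤ tail c k := tail_anti c hkM
  · intro h
    have htk : tail c k ≠ 0 := by omega
    have hkK : k ≤ c.support.sup id := le_sup_of_tail_ne_zero htk
    have hsub : Finset.Icc 1 k ⊆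
        (Finset.Icc 1 (c.support.sup id)).filter (fun k' => i < tail c k') := by
      intro k' hk'
      simp only [Finset.mem_Icc] at hk'
      simp only [Finset.mem_filter, Finset.mem_Icc]
      refine ⟨⟨hk'.1, le_trans hk'.2 hkK⟩, lt_of_lt_of_le h (tail_anti c hk'.2)⟩
    have := Finset.card_le_card hsub
    rwa [Nat.card_Icc, Nat.add_sub_cancel] at this

lemma conj_fromD (c : ℕ →₀ ℕ) {k : ℕ} (hk : 1 ≤ k) :
    (fromD c).conj k = tail c k := by
  rw [CPartition.conj]
  have : {i : ℕ | k ≤ (fromD c).parts i} = Set.Iio (tail c k) := by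
    ext i
    simp only [Set.mem_setOf_eq, Set.mem_Iio]
    exact le_parts_fromD c hk i
  rw [this, Nat.card_coe_set_eq, ← Finset.coe_Iio, Set.ncard_coe_finset, Nat.card_Iio]

lemma toD_fromD (c : ℕ →₀ ℕ) (hc0 : c 0 = 0) : (fromD c).toD = c := by
  ext k
  rcases Nat.eq_zero_or_pos k with rfl | hk
  · rw [toD_zero, hc0]
  · rw [toD_apply, conj_fromD c hk, conj_fromD c (by omega), tail_succ c k]
    omega

lemma fromD_toD (lam : CPartition) : fromD lam.toD = lam := by
  apply ext'
  funext i
  have hsupp : ∀ j ∈ lam.toD.support, j ≤ lam.parts 0 := by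
    intro j hj
    have := lam.toD_support_subset hj
    simp only [Finset.mem_Icc] at this
    exact this.2
  have htail : ∀ k, 1 ≤ k → tail lam.toD k = lam.conj k := by
    intro k hk
    rw [tail_eq_sum_Icc lam.toD hsupp k, ← lam.conj_eq_sum hk (le_refl _)]
  show ((Finset.Icc 1 (lam.toD.support.sup id)).filter
      (fun k => i < tail lam.toD k)).card = lam.parts i
  have hset : (Finset.Icc 1 (lam.toD.support.sup id)).filter
      (fun k => i < tail lam.toD k) = Finset.Icc 1 (lam.parts i) := by
    ext k
    simp only [Finset.mem_filter, Finset.mem_Icc]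
    constructor
    · rintro ⟨⟨h1, _⟩, h3⟩
      rw [htail k h1] at h3
      exact ⟨h1, (lam.lt_conj_iff h1 i).mp h3⟩
    · rintro ⟨h1, h2⟩
      have h3 : i < lam.conj k := (lam.lt_conj_iff h1 i).mpr h2
      rw [← htail k h1] at h3
      exact ⟨⟨h1, le_sup_of_tail_ne_zero (by omega)⟩, h3⟩
  rw [hset, Nat.card_Icc, Nat.add_sub_cancel]

end CPartition

open CPartition in
lemma sum_Icc_pair (f : ℕ → ℕ) (N : ℕ) :
    ∑ k ∈ Finset.Icc 1 (2 * N), f k = ∑ i ∈ Finset.Icc 1 N, (f (2 * i - 1) + f (2 * i)) := by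
  induction N with
  | zero => simp
  | succ N ih =>
    rw [show 2 * (N + 1) = (2 * N + 1) + 1 by ring,
      ← Finset.insert_Icc_right_eq_Icc_add_one (a := 1) (b := 2 * N + 1) (by omega),
      Finset.sum_insert (by simp),
      ← Finset.insert_Icc_right_eq_Icc_add_one (a := 1) (b := 2 * N) (by omega),
      Finset.sum_insert (by simp),
      ← Finset.insert_Icc_right_eq_Icc_add_one (a := 1) (b := N) (by omega),
      Finset.sum_insert (by simp), ih]
    have h1 : 2 * (N + 1) - 1 = 2 * N + 1 := by omega
    have h2 : 2 * (N + 1) = 2 * N + 1 + 1 := by omega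
    rw [h1, h2]
    ring

namespace CPartition

lemma oW_eq (c : ℕ →₀ ℕ) {M : ℕ} (hsupp : c.support ⊆ Finset.Icc 1 (2 * M)) :
    oW c = ∑ i ∈ Finset.Icc 1 M, (c (2 * i - 1) * i + c (2 * i) * i) := by
  rw [oW, Finsupp.sum_of_support_subset _ hsupp _ (fun i _ => by simp),
    sum_Icc_pair (fun k => c k * ((k + 1) / 2)) M]
  apply Finset.sum_congr rfl
  intro i hi
  simp only [Finset.mem_Icc] at hi
  have h1 : (2 * i - 1 + 1) / 2 = i := by omega
  have h2 : (2 * i + 1) / 2 = i := by omega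
  rw [h1, h2]

lemma eW_eq (c : ℕ →₀ ℕ) {M : ℕ} (hsupp : c.support ⊆ Finset.Icc 1 (2 * M)) :
    eW c = ∑ i ∈ Finset.Icc 1 M, (c (2 * i - 1) * (i - 1) + c (2 * i) * i) := by
  rw [eW, Finsupp.sum_of_support_subset _ hsupp _ (fun i _ => by simp),
    sum_Icc_pair (fun k => c k * (k / 2)) M]
  apply Finset.sum_congr rfl
  intro i hi
  simp only [Finset.mem_Icc] at hi
  have h1 : (2 * i - 1) / 2 = i - 1 := by omega
  have h2 : 2 * i / 2 = i := by omega
  rw [h1, h2]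

lemma support_le_oW_add_eW (c : ℕ →₀ ℕ) {k : ℕ} (h : k ∈ c.support) :
    k ≤ oW c + eW c := by
  have hck : 1 ≤ c k := by
    have := Finsupp.mem_support_iff.mp h
    omega
  have h1 : c k * ((k + 1) / 2) ≤ oW c := by
    rw [oW, Finsupp.sum]
    exact Finset.single_le_sum (f := fun j => c j * ((j + 1) / 2)) (fun _ _ => Nat.zero_le _) h
  have h2 : c k * (k / 2) ≤ eW c := by
    rw [eW, Finsupp.sum]
    exact Finset.single_le_sum (f := fun j => c j * (j / 2)) (fun _ _ => Nat.zero_le _) h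
  have h3 : (k + 1) / 2 ≤ c k * ((k + 1) / 2) := Nat.le_mul_of_pos_left _ hck
  have h4 : k / 2 ≤ c k * (k / 2) := Nat.le_mul_of_pos_left _ hck
  omega

end CPartition

open MvPowerSeries

open scoped Classical in
/-- Geometric series `∑_k t^(k•d)`. -/
noncomputable def geom (d : Fin 2 →₀ ℕ) : MvPowerSeries (Fin 2) ℚ :=
  fun e => if ∃ k : ℕ, k • d = e then 1 else 0

lemma coeff_geom_eq {d e : Fin 2 →₀ ℕ} (h : ∃ k : ℕ, k • d = e) :
    MvPowerSeries.coeff (R := ℚ) e (geom d) = 1 := by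
  classical
  have hh : (MvPowerSeries.coeff (R := ℚ) e) (geom d) =
      (if ∃ k : ℕ, k • d = e then (1 : ℚ) else 0) := rfl
  rw [hh, if_pos h]

lemma coeff_geom_ne {d e : Fin 2 →₀ ℕ} (h : ¬ ∃ k : ℕ, k • d = e) :
    MvPowerSeries.coeff (R := ℚ) e (geom d) = 0 := by
  classical
  have hh : (MvPowerSeries.coeff (R := ℚ) e) (geom d) =
      (if ∃ k : ℕ, k • d = e then (1 : ℚ) else 0) := rfl
  rw [hh, if_neg h]

lemma one_sub_mul_geom (d : Fin 2 →₀ ℕ) (hd : d ≠ 0) :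
    (1 - MvPowerSeries.monomial (R := ℚ) d 1) * geom d = 1 := by
  ext e
  classical
  rw [sub_mul, one_mul, map_sub, coeff_monomial_mul]
  by_cases he : ∃ k : ℕ, k • d = e
  · obtain ⟨k, rfl⟩ := he
    rcases Nat.eq_zero_or_pos k with rfl | hk
    · have hzz : (0 : ℕ) • d = 0 := zero_smul _ _
      rw [hzz]
      have hd0 : ¬ d ≤ (0 : Fin 2 →₀ ℕ) := fun hle => hd (le_antisymm hle (zero_le : (0 : Fin 2 →₀ ℕ) ≤ d))
      rw [if_neg hd0, coeff_one, if_pos rfl, sub_zero, coeff_geom_eq ⟨0, hzz⟩]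
    · have hle : d ≤ k • d := by
        rw [show k = 1 + (k - 1) by omega, add_smul, one_smul]
        exact le_self_add
      rw [if_pos hle]
      have hsub : k • d - d = (k - 1) • d := by
        have : k • d = (k - 1) • d + d := by
          conv_lhs => rw [show k = (k - 1) + 1 by omega]
          rw [add_smul, one_smul]
        rw [this, add_tsub_cancel_right]
      rw [hsub, coeff_geom_eq ⟨k - 1, rfl⟩, coeff_one, coeff_geom_eq ⟨k, rfl⟩]
      have hne : k • d ≠ 0 := by
        intro hz
        apply hd
        ext s
        have := DFunLike.congr_fun hz s
        simp only [Finsupp.smul_apply, smul_eq_mul, Finsupp.coe_zero, Pi.zero_apply] at this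
        simp only [Finsupp.coe_zero, Pi.zero_apply]
        exact Nat.mul_eq_zero.mp this |>.resolve_left (by omega)
      rw [if_neg hne, mul_one, sub_self]
  · rw [coeff_geom_ne he]
    have he0 : e ≠ 0 := fun h => he ⟨0, by rw [h, zero_smul]⟩
    rw [coeff_one, if_neg he0]
    by_cases hle : d ≤ e
    · rw [if_pos hle, coeff_geom_ne (by
        rintro ⟨k, hk⟩
        exact he ⟨k + 1, by rw [add_smul, one_smul, hk, tsub_add_cancel_of_le hle]⟩),
        mul_zero, sub_zero]
    · rw [if_neg hle, sub_zero]

/-- Exponent vectors of the factors. -/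
noncomputable def dA (i : ℕ) : Fin 2 →₀ ℕ := Finsupp.single 0 i + Finsupp.single 1 i
noncomputable def dB (i : ℕ) : Fin 2 →₀ ℕ := Finsupp.single 0 i + Finsupp.single 1 (i - 1)
noncomputable def dC (i : ℕ) : Fin 2 →₀ ℕ := Finsupp.single 0 (i - 1) + Finsupp.single 1 i

lemma dA_apply0 (i : ℕ) : dA i 0 = i := by simp [dA]
lemma dA_apply1 (i : ℕ) : dA i 1 = i := by simp [dA]
lemma dB_apply0 (i : ℕ) : dB i 0 = i := by simp [dB]
lemma dB_apply1 (i : ℕ) : dB i 1 = i - 1 := by simp [dB]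
lemma dC_apply0 (i : ℕ) : dC i 0 = i - 1 := by simp [dC]
lemma dC_apply1 (i : ℕ) : dC i 1 = i := by simp [dC]

lemma dA_ne_zero {i : ℕ} (hi : 1 ≤ i) : dA i ≠ 0 := fun h => by
  have := DFunLike.congr_fun h 0; rw [dA_apply0] at this; simp at this; omega

lemma dB_ne_zero {i : ℕ} (hi : 1 ≤ i) : dB i ≠ 0 := fun h => by
  have := DFunLike.congr_fun h 0; rw [dB_apply0] at this; simp at this; omega

lemma dC_ne_zero {i : ℕ} (hi : 1 ≤ i) : dC i ≠ 0 := fun h => by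
  have := DFunLike.congr_fun h 1; rw [dC_apply1] at this; simp at this; omega

lemma XY_pow_eq (i : ℕ) :
    ((MvPowerSeries.X 0 * MvPowerSeries.X 1 : MvPowerSeries (Fin 2) ℚ)) ^ i =
      MvPowerSeries.monomial (R := ℚ) (dA i) 1 := by
  rw [mul_pow, MvPowerSeries.X_pow_eq, MvPowerSeries.X_pow_eq, monomial_mul_monomial, one_mul, dA]

lemma X0_mul_eq {i : ℕ} (hi : 1 ≤ i) :
    (MvPowerSeries.X 0 * (MvPowerSeries.X 0 * MvPowerSeries.X 1) ^ (i - 1) :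
      MvPowerSeries (Fin 2) ℚ) = MvPowerSeries.monomial (R := ℚ) (dB i) 1 := by
  rw [XY_pow_eq, MvPowerSeries.X_def, monomial_mul_monomial, one_mul, dA, dB,
    ← add_assoc, ← Finsupp.single_add, show 1 + (i - 1) = i by omega]

lemma X1_mul_eq {i : ℕ} (hi : 1 ≤ i) :
    (MvPowerSeries.X 1 * (MvPowerSeries.X 0 * MvPowerSeries.X 1) ^ (i - 1) :
      MvPowerSeries (Fin 2) ℚ) = MvPowerSeries.monomial (R := ℚ) (dC i) 1 := by
  rw [XY_pow_eq, MvPowerSeries.X_def, monomial_mul_monomial, one_mul, dA, dC]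
  have : (Finsupp.single 1 1 + (Finsupp.single 0 (i-1) + Finsupp.single 1 (i-1)) :
      Fin 2 →₀ ℕ) = Finsupp.single 0 (i-1) + (Finsupp.single 1 1 + Finsupp.single 1 (i-1)) := by
    abel
  rw [this, ← Finsupp.single_add, show 1 + (i - 1) = i by omega]

lemma factor_inv {i : ℕ} (hi : 1 ≤ i) :
    (((1 - (MvPowerSeries.X 0 * MvPowerSeries.X 1) ^ i) ^ 2 *
      (1 - MvPowerSeries.X 0 * (MvPowerSeries.X 0 * MvPowerSeries.X 1) ^ (i - 1)) *
      (1 - MvPowerSeries.X 1 * (MvPowerSeries.X 0 * MvPowerSeries.X 1) ^ (i - 1)))⁻¹ :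
        MvPowerSeries (Fin 2) ℚ) =
    geom (dA i) * geom (dA i) * geom (dB i) * geom (dC i) := by
  rw [XY_pow_eq, X0_mul_eq hi, X1_mul_eq hi]
  have hccA : constantCoeff (σ := Fin 2) (R := ℚ) (1 - MvPowerSeries.monomial (R := ℚ) (dA i) 1) = 1 := by
    rw [map_sub, map_one, ← MvPowerSeries.coeff_zero_eq_constantCoeff_apply,
      MvPowerSeries.coeff_monomial, if_neg (fun h => dA_ne_zero hi h.symm), sub_zero]
  have hccB : constantCoeff (σ := Fin 2) (R := ℚ) (1 - MvPowerSeries.monomial (R := ℚ) (dB i) 1) = 1 := by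
    rw [map_sub, map_one, ← MvPowerSeries.coeff_zero_eq_constantCoeff_apply,
      MvPowerSeries.coeff_monomial, if_neg (fun h => dB_ne_zero hi h.symm), sub_zero]
  have hccC : constantCoeff (σ := Fin 2) (R := ℚ) (1 - MvPowerSeries.monomial (R := ℚ) (dC i) 1) = 1 := by
    rw [map_sub, map_one, ← MvPowerSeries.coeff_zero_eq_constantCoeff_apply,
      MvPowerSeries.coeff_monomial, if_neg (fun h => dC_ne_zero hi h.symm), sub_zero]
  rw [MvPowerSeries.inv_eq_iff_mul_eq_one (by
    rw [map_mul, map_mul, map_pow, hccA, hccB, hccC]; norm_num)]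
  have hA := one_sub_mul_geom (dA i) (dA_ne_zero hi)
  have hB := one_sub_mul_geom (dB i) (dB_ne_zero hi)
  have hC := one_sub_mul_geom (dC i) (dC_ne_zero hi)
  calc geom (dA i) * geom (dA i) * geom (dB i) * geom (dC i) *
      ((1 - MvPowerSeries.monomial (R := ℚ) (dA i) 1) ^ 2 *
        (1 - MvPowerSeries.monomial (R := ℚ) (dB i) 1) * (1 - MvPowerSeries.monomial (R := ℚ) (dC i) 1))
      = ((1 - MvPowerSeries.monomial (R := ℚ) (dA i) 1) * geom (dA i)) *
        ((1 - MvPowerSeries.monomial (R := ℚ) (dA i) 1) * geom (dA i)) *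
        ((1 - MvPowerSeries.monomial (R := ℚ) (dB i) 1) * geom (dB i)) *
        ((1 - MvPowerSeries.monomial (R := ℚ) (dC i) 1) * geom (dC i)) := by ring
    _ = 1 := by rw [hA, hB, hC]; ring

open CPartition Finset

/-- The exponent vector attached to a factor index. -/
noncomputable def dv (j : ℕ × Fin 4) : Fin 2 →₀ ℕ := ![dA j.1, dA j.1, dB j.1, dC j.1] j.2

lemma dv_ne_zero {j : ℕ × Fin 4} (hj : 1 ≤ j.1) : dv j ≠ 0 := by
  obtain ⟨i, t⟩ := j
  fin_cases t <;>
    simp only [dv, Matrix.cons_val_zero, Matrix.cons_val_one, Matrix.head_cons,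
      Matrix.cons_val_two, Matrix.tail_cons, Matrix.cons_val_three, Matrix.head_fin_const] <;>
    first
      | exact dA_ne_zero hj
      | exact dB_ne_zero hj
      | exact dC_ne_zero hj

/-- The multiplicity vector attached to a pair of difference vectors. -/
noncomputable def av (c c' : ℕ →₀ ℕ) (j : ℕ × Fin 4) : ℕ :=
  ![c (2 * j.1), c' (2 * j.1), c (2 * j.1 - 1), c' (2 * j.1 - 1)] j.2

lemma prod_inv_eq (N : ℕ) :
    (∏ i ∈ Finset.Icc 1 N,
      (((1 - (MvPowerSeries.X 0 * MvPowerSeries.X 1) ^ i) ^ 2 *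
        (1 - MvPowerSeries.X 0 * (MvPowerSeries.X 0 * MvPowerSeries.X 1) ^ (i - 1)) *
        (1 - MvPowerSeries.X 1 * (MvPowerSeries.X 0 * MvPowerSeries.X 1) ^ (i - 1)))⁻¹ :
          MvPowerSeries (Fin 2) ℚ)) =
    ∏ j ∈ (Finset.Icc 1 N) ×ˢ (Finset.univ : Finset (Fin 4)), geom (dv j) := by
  rw [Finset.prod_product]
  apply Finset.prod_congr rfl
  intro i hi
  simp only [Finset.mem_Icc] at hi
  rw [factor_inv hi.1, Fin.prod_univ_four]
  simp only [dv, Matrix.cons_val_zero, Matrix.cons_val_one, Matrix.head_cons,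
    Matrix.cons_val_two, Matrix.tail_cons, Matrix.cons_val_three, Matrix.head_fin_const]

open scoped Classical in
lemma coeff_prod_geoms (N : ℕ) (E : Fin 2 →₀ ℕ) :
    MvPowerSeries.coeff (R := ℚ) E
        (∏ j ∈ (Finset.Icc 1 N) ×ˢ (Finset.univ : Finset (Fin 4)), geom (dv j)) =
      (((Finset.Icc 1 N) ×ˢ (Finset.univ : Finset (Fin 4))).finsuppAntidiag E |>.filter
        (fun l => ∀ j ∈ (Finset.Icc 1 N) ×ˢ (Finset.univ : Finset (Fin 4)),
          ∃ k : ℕ, k • dv j = l j)).card := by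
  rw [MvPowerSeries.coeff_prod]
  rw [Finset.sum_congr rfl (fun l _ => show
      (∏ j ∈ (Finset.Icc 1 N) ×ˢ (Finset.univ : Finset (Fin 4)),
        MvPowerSeries.coeff (R := ℚ) (l j) (geom (dv j))) =
      (if (∀ j ∈ (Finset.Icc 1 N) ×ˢ (Finset.univ : Finset (Fin 4)),
          ∃ k : ℕ, k • dv j = l j) then (1 : ℚ) else 0) from by
    rw [← Finset.prod_boole]
    apply Finset.prod_congr rfl
    intro j _
    by_cases h : ∃ k : ℕ, k • dv j = l j
    · rw [coeff_geom_eq h, if_pos h]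
    · rw [coeff_geom_ne h, if_neg h])]
  rw [Finset.sum_boole]

/-- The key coordinate computation. -/
lemma sum_av_dv (N : ℕ) (c c' : ℕ →₀ ℕ)
    (hc : c.support ⊆ Finset.Icc 1 (2 * N)) (hc' : c'.support ⊆ Finset.Icc 1 (2 * N)) :
    ∑ j ∈ (Finset.Icc 1 N) ×ˢ (Finset.univ : Finset (Fin 4)), av c c' j • dv j =
      Finsupp.single 0 (oW c + eW c') + Finsupp.single 1 (eW c + oW c') := by
  have key0 :
      (∑ j ∈ (Finset.Icc 1 N) ×ˢ (Finset.univ : Finset (Fin 4)), av c c' j • dv j) 0 =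
      (Finsupp.single 0 (oW c + eW c') + Finsupp.single 1 (eW c + oW c') : Fin 2 →₀ ℕ) 0 := by
    rw [Finsupp.finset_sum_apply]
    have hterm : ∀ j : ℕ × Fin 4, (av c c' j • dv j) 0 = av c c' j * dv j 0 := by
      intro j; rw [Finsupp.smul_apply, smul_eq_mul]
    rw [Finset.sum_congr rfl (fun j _ => hterm j), Finset.sum_product]
    have : ∀ i ∈ Finset.Icc 1 N, (∑ t : Fin 4, av c c' (i, t) * dv (i, t) 0) =
        (c (2*i-1) * i + c (2*i) * i) + (c' (2*i-1) * (i-1) + c' (2*i) * i) := by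
      intro i hi
      rw [Fin.sum_univ_four]
      simp only [av, dv, Matrix.cons_val_zero, Matrix.cons_val_one, Matrix.head_cons,
        Matrix.cons_val_two, Matrix.tail_cons, Matrix.cons_val_three, Matrix.head_fin_const,
        dA_apply0, dB_apply0, dC_apply0]
      ring
    rw [Finset.sum_congr rfl this, Finset.sum_add_distrib, ← oW_eq c hc, ← eW_eq c' hc']
    simp [Finsupp.single_apply]
  have key1 :
      (∑ j ∈ (Finset.Icc 1 N) ×ˢ (Finset.univ : Finset (Fin 4)), av c c' j • dv j) 1 =
      (Finsupp.single 0 (oW c + eW c') + Finsupp.single 1 (eW c + oW c') : Fin 2 →₀ ℕ) 1 := by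
    rw [Finsupp.finset_sum_apply]
    have hterm : ∀ j : ℕ × Fin 4, (av c c' j • dv j) 1 = av c c' j * dv j 1 := by
      intro j; rw [Finsupp.smul_apply, smul_eq_mul]
    rw [Finset.sum_congr rfl (fun j _ => hterm j), Finset.sum_product]
    have : ∀ i ∈ Finset.Icc 1 N, (∑ t : Fin 4, av c c' (i, t) * dv (i, t) 1) =
        (c (2*i-1) * (i-1) + c (2*i) * i) + (c' (2*i-1) * i + c' (2*i) * i) := by
      intro i hi
      rw [Fin.sum_univ_four]
      simp only [av, dv, Matrix.cons_val_zero, Matrix.cons_val_one, Matrix.head_cons,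
        Matrix.cons_val_two, Matrix.tail_cons, Matrix.cons_val_three, Matrix.head_fin_const,
        dA_apply1, dB_apply1, dC_apply1]
      ring
    rw [Finset.sum_congr rfl this, Finset.sum_add_distrib, ← eW_eq c hc, ← oW_eq c' hc']
    simp [Finsupp.single_apply]
  ext s
  fin_cases s
  · exact key0
  · exact key1

lemma cond_support {m n N : ℕ} (hN : m + n ≤ N) {p : CPartition × CPartition}
    (h1 : p.1.oddCols + p.2.evenCols = m) (h2 : p.1.evenCols + p.2.oddCols = n) :
    (toD p.1).support ⊆ Finset.Icc 1 N ∧ (toD p.2).support ⊆ Finset.Icc 1 N := by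
  rw [oddCols_eq, evenCols_eq] at h1
  rw [oddCols_eq, evenCols_eq] at h2
  constructor
  · intro k hk
    have hk1 : k ≤ oW (toD p.1) + eW (toD p.1) := support_le_oW_add_eW _ hk
    have hk0 : (toD p.1) k ≠ 0 := Finsupp.mem_support_iff.mp hk
    have hkne : k ≠ 0 := fun h => hk0 (h ▸ toD_zero p.1)
    simp only [Finset.mem_Icc]
    omega
  · intro k hk
    have hk1 : k ≤ oW (toD p.2) + eW (toD p.2) := support_le_oW_add_eW _ hk
    have hk0 : (toD p.2) k ≠ 0 := Finsupp.mem_support_iff.mp hk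
    have hkne : k ≠ 0 := fun h => hk0 (h ▸ toD_zero p.2)
    simp only [Finset.mem_Icc]
    omega

lemma av_mem_J {N : ℕ} {c c' : ℕ →₀ ℕ}
    (hc : c.support ⊆ Finset.Icc 1 N) (hc' : c'.support ⊆ Finset.Icc 1 N)
    (hc0 : c 0 = 0) (hc'0 : c' 0 = 0) :
    ∀ j : ℕ × Fin 4, av c c' j • dv j ≠ 0 →
      j ∈ (Finset.Icc 1 N) ×ˢ (Finset.univ : Finset (Fin 4)) := by
  rintro ⟨i, t⟩ hj
  rw [Finset.mem_product]
  refine ⟨?_, Finset.mem_univ _⟩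
  have hav : av c c' (i, t) ≠ 0 := by
    intro h; rw [h, zero_smul] at hj; exact hj rfl
  simp only [Finset.mem_Icc]
  fin_cases t <;>
    simp only [av, Matrix.cons_val_zero, Matrix.cons_val_one, Matrix.head_cons,
      Matrix.cons_val_two, Matrix.tail_cons, Matrix.cons_val_three, Matrix.head_fin_const]
      at hav
  · have := hc (Finsupp.mem_support_iff.mpr hav)
    simp only [Finset.mem_Icc] at this; omega
  · have := hc' (Finsupp.mem_support_iff.mpr hav)
    simp only [Finset.mem_Icc] at this; omega
  · rcases Nat.eq_zero_or_pos i with rfl | hi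
    · exact absurd (by simpa using hc0) hav
    · have := hc (Finsupp.mem_support_iff.mpr hav)
      simp only [Finset.mem_Icc] at this; omega
  · rcases Nat.eq_zero_or_pos i with rfl | hi
    · exact absurd (by simpa using hc'0) hav
    · have := hc' (Finsupp.mem_support_iff.mpr hav)
      simp only [Finset.mem_Icc] at this; omega

/-- The forward map on difference vectors. -/
noncomputable def LL (N : ℕ) (c c' : ℕ →₀ ℕ)
    (hc : c.support ⊆ Finset.Icc 1 N) (hc' : c'.support ⊆ Finset.Icc 1 N)
    (hc0 : c 0 = 0) (hc'0 : c' 0 = 0) : (ℕ × Fin 4) →₀ (Fin 2 →₀ ℕ) :=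
  Finsupp.onFinset ((Finset.Icc 1 N) ×ˢ Finset.univ)
    (fun j => av c c' j • dv j) (av_mem_J hc hc' hc0 hc'0)

lemma LL_apply {N : ℕ} {c c' : ℕ →₀ ℕ} {hc hc' hc0 hc'0} (j : ℕ × Fin 4) :
    LL N c c' hc hc' hc0 hc'0 j = av c c' j • dv j := rfl

/-- Cancellation: equal smul values force equal multiplicities. -/
lemma av_cancel {c1 c1' c2 c2' : ℕ →₀ ℕ}
    (h : ∀ j : ℕ × Fin 4, 1 ≤ j.1 → av c1 c1' j • dv j = av c2 c2' j • dv j)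
    (i : ℕ) (t : Fin 4) (hi : 1 ≤ i) : av c1 c1' (i, t) = av c2 c2' (i, t) := by
  have hh := h (i, t) hi
  obtain ⟨s, hs⟩ := Finsupp.ne_iff.mp (dv_ne_zero (j := (i, t)) hi)
  simp only [Finsupp.coe_zero, Pi.zero_apply] at hs
  have hcc := DFunLike.congr_fun hh s
  rw [Finsupp.smul_apply, Finsupp.smul_apply, smul_eq_mul, smul_eq_mul] at hcc
  exact Nat.eq_of_mul_eq_mul_right (Nat.pos_of_ne_zero hs) hcc

lemma toD_eq_of_av_eq {c1 c1' c2 c2' : ℕ →₀ ℕ}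
    (h01 : c1 0 = 0) (h02 : c2 0 = 0) (h01' : c1' 0 = 0) (h02' : c2' 0 = 0)
    (h : ∀ j : ℕ × Fin 4, 1 ≤ j.1 → av c1 c1' j • dv j = av c2 c2' j • dv j) :
    c1 = c2 ∧ c1' = c2' := by
  have hav := fun i t hi => av_cancel h i t hi
  constructor
  · ext k
    rcases Nat.eq_zero_or_pos k with rfl | hk
    · rw [h01, h02]
    · rcases Nat.even_or_odd k with he | ho
      · have := hav (k / 2) 0 (by rw [Nat.even_iff] at he; omega)
        simp only [av, Matrix.cons_val_zero] at this
        rw [Nat.even_iff] at he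
        rwa [show 2 * (k / 2) = k by omega] at this
      · have := hav ((k + 1) / 2) 2 (by omega)
        simp only [av, Matrix.cons_val_two, Matrix.tail_cons, Matrix.head_cons] at this
        rw [Nat.odd_iff] at ho
        rwa [show 2 * ((k + 1) / 2) - 1 = k by omega] at this
  · ext k
    rcases Nat.eq_zero_or_pos k with rfl | hk
    · rw [h01', h02']
    · rcases Nat.even_or_odd k with he | ho
      · have := hav (k / 2) 1 (by rw [Nat.even_iff] at he; omega)
        simp only [av, Matrix.cons_val_one, Matrix.head_cons] at this
        rw [Nat.even_iff] at he
        rwa [show 2 * (k / 2) = k by omega] at this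
      · have := hav ((k + 1) / 2) 3 (by omega)
        simp only [av, Matrix.cons_val_three, Matrix.head_fin_const] at this
        rw [Nat.odd_iff] at ho
        rwa [show 2 * ((k + 1) / 2) - 1 = k by omega] at this

/-- Recover a difference vector from an antidiagonal element. -/
noncomputable def recoverD (N : ℕ) (l : (ℕ × Fin 4) →₀ (Fin 2 →₀ ℕ)) (te tO : Fin 4)
    (so : Fin 2)
    (hsup : l.support ⊆ (Finset.Icc 1 N) ×ˢ (Finset.univ : Finset (Fin 4))) : ℕ →₀ ℕ :=
  Finsupp.onFinset (Finset.Icc 1 (2 * N))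
    (fun k => if k % 2 = 0 then (l (k / 2, te)) 0 / (k / 2)
              else (l ((k + 1) / 2, tO)) so / ((k + 1) / 2)) (by
    intro k hk
    simp only [Finset.mem_Icc]
    by_cases hpar : k % 2 = 0
    · rw [if_pos hpar] at hk
      have hl : l (k / 2, te) ≠ 0 := by
        intro h; rw [h] at hk; simp at hk
      have := hsup (Finsupp.mem_support_iff.mpr hl)
      rw [Finset.mem_product, Finset.mem_Icc] at this
      omega
    · rw [if_neg hpar] at hk
      have hl : l ((k + 1) / 2, tO) ≠ 0 := by
        intro h; rw [h] at hk; simp at hk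
      have := hsup (Finsupp.mem_support_iff.mpr hl)
      rw [Finset.mem_product, Finset.mem_Icc] at this
      omega)

lemma recoverD_apply {N : ℕ} {l : (ℕ × Fin 4) →₀ (Fin 2 →₀ ℕ)} {te tO : Fin 4} {so : Fin 2}
    {hsup} (k : ℕ) :
    recoverD N l te tO so hsup k =
      if k % 2 = 0 then (l (k / 2, te)) 0 / (k / 2)
      else (l ((k + 1) / 2, tO)) so / ((k + 1) / 2) := rfl

lemma recoverD_zero {N : ℕ} {l : (ℕ × Fin 4) →₀ (Fin 2 →₀ ℕ)} {te tO : Fin 4} {so : Fin 2}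
    {hsup} : recoverD N l te tO so hsup 0 = 0 := by
  rw [recoverD_apply]
  norm_num

lemma Icc_sub : ∀ N : ℕ, Finset.Icc 1 N ⊆ Finset.Icc 1 (2 * N) := fun N =>
  Finset.Icc_subset_Icc (le_refl 1) (by omega)

lemma LL_mem {m n N : ℕ} (c c' : ℕ →₀ ℕ)
    (hc : c.support ⊆ Finset.Icc 1 N) (hc' : c'.support ⊆ Finset.Icc 1 N)
    (hc0 : c 0 = 0) (hc'0 : c' 0 = 0)
    (hm : oW c + eW c' = m) (hn : eW c + oW c' = n) :
    (((Finset.Icc 1 N) ×ˢ (Finset.univ : Finset (Fin 4))).sum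
        (LL N c c' hc hc' hc0 hc'0) = Finsupp.single 0 m + Finsupp.single 1 n) ∧
    (LL N c c' hc hc' hc0 hc'0).support ⊆ (Finset.Icc 1 N) ×ˢ Finset.univ ∧
    (∀ j ∈ (Finset.Icc 1 N) ×ˢ (Finset.univ : Finset (Fin 4)),
      ∃ k : ℕ, k • dv j = LL N c c' hc hc' hc0 hc'0 j) := by
  refine ⟨?_, Finsupp.support_onFinset_subset, fun j _ => ⟨av c c' j, (LL_apply j).symm⟩⟩
  rw [show (((Finset.Icc 1 N) ×ˢ (Finset.univ : Finset (Fin 4))).sum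
      (LL N c c' hc hc' hc0 hc'0)) =
      ∑ j ∈ (Finset.Icc 1 N) ×ˢ (Finset.univ : Finset (Fin 4)), av c c' j • dv j from
    Finset.sum_congr rfl (fun j _ => LL_apply j)]
  rw [sum_av_dv N c c' (hc.trans (Icc_sub N)) (hc'.trans (Icc_sub N)), hm, hn]


set_option maxHeartbeats 2000000 in
/-- The character of the evaluation Verma module `G₀^μ` (pairs of two-colored
vertical partitions with opposite starting colors):
`Σ_{(λ,μ)} x^{o(λ)+e(μ)} y^{e(λ)+o(μ)}
  = ∏_{i≥1} (1-(xy)^i)⁻² (1-x(xy)^{i-1})⁻¹ (1-y(xy)^{i-1})⁻¹`,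
stated coefficientwise (any truncation `N ≥ m + n` of the infinite product
computes the coefficient of `x^m y^n`). -/
theorem verma_module_character (m n : ℕ) (N : ℕ) (hN : m + n ≤ N) :
    MvPowerSeries.coeff (R := ℚ) (Finsupp.single 0 m + Finsupp.single 1 n)
      (∏ i ∈ Finset.Icc 1 N,
        (((1 - (MvPowerSeries.X 0 * MvPowerSeries.X 1) ^ i) ^ 2 *
          (1 - MvPowerSeries.X 0 * (MvPowerSeries.X 0 * MvPowerSeries.X 1) ^ (i - 1)) *
          (1 - MvPowerSeries.X 1 * (MvPowerSeries.X 0 * MvPowerSeries.X 1) ^ (i - 1)))⁻¹ :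
            MvPowerSeries (Fin 2) ℚ))
    = Nat.card {p : CPartition × CPartition //
        p.1.oddCols + p.2.evenCols = m ∧ p.1.evenCols + p.2.oddCols = n} := by
  classical
  rw [prod_inv_eq, coeff_prod_geoms]
  set J := (Finset.Icc 1 N) ×ˢ (Finset.univ : Finset (Fin 4)) with hJdef
  set E : Fin 2 →₀ ℕ := Finsupp.single 0 m + Finsupp.single 1 n with hEdef
  set T := (J.finsuppAntidiag E).filter
    (fun l => ∀ j ∈ J, ∃ k : ℕ, k • dv j = l j) with hTdef
  suffices h : Nat.card {p : CPartition × CPartition //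
      p.1.oddCols + p.2.evenCols = m ∧ p.1.evenCols + p.2.oddCols = n} = T.card by
    rw [h]
  -- the forward map
  have hsupp : ∀ p : {p : CPartition × CPartition //
      p.1.oddCols + p.2.evenCols = m ∧ p.1.evenCols + p.2.oddCols = n},
      (toD p.1.1).support ⊆ Finset.Icc 1 N ∧ (toD p.1.2).support ⊆ Finset.Icc 1 N :=
    fun p => cond_support hN p.2.1 p.2.2
  have hcond : ∀ p : {p : CPartition × CPartition //
      p.1.oddCols + p.2.evenCols = m ∧ p.1.evenCols + p.2.oddCols = n},
      oW (toD p.1.1) + eW (toD p.1.2) = m ∧ eW (toD p.1.1) + oW (toD p.1.2) = n := by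
    intro p
    obtain ⟨h1, h2⟩ := p.2
    rw [oddCols_eq, evenCols_eq] at h1
    rw [oddCols_eq, evenCols_eq] at h2
    exact ⟨h1, h2⟩
  set F : {p : CPartition × CPartition //
      p.1.oddCols + p.2.evenCols = m ∧ p.1.evenCols + p.2.oddCols = n} → {l // l ∈ T} :=
    fun p => ⟨LL N (toD p.1.1) (toD p.1.2) (hsupp p).1 (hsupp p).2 (toD_zero _) (toD_zero _), by
      obtain ⟨hs, hsub, hmul⟩ := LL_mem (toD p.1.1) (toD p.1.2) (hsupp p).1 (hsupp p).2
        (toD_zero _) (toD_zero _) (hcond p).1 (hcond p).2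
      rw [hTdef, Finset.mem_filter, Finset.mem_finsuppAntidiag]
      exact ⟨⟨hs, hsub⟩, hmul⟩⟩ with hFdef
  have hinj : Function.Injective F := by
    intro p q hpq
    have heq := Subtype.ext_iff.mp hpq
    have hav : ∀ j : ℕ × Fin 4, 1 ≤ j.1 →
        av (toD p.1.1) (toD p.1.2) j • dv j = av (toD q.1.1) (toD q.1.2) j • dv j := by
      intro j _
      have := DFunLike.congr_fun heq j
      rwa [LL_apply, LL_apply] at this
    obtain ⟨h1, h2⟩ := toD_eq_of_av_eq (toD_zero _) (toD_zero _) (toD_zero _) (toD_zero _) hav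
    apply Subtype.ext
    apply Prod.ext
    · rw [← fromD_toD p.1.1, h1, fromD_toD]
    · rw [← fromD_toD p.1.2, h2, fromD_toD]
  have hsurj : Function.Surjective F := by
    rintro ⟨l, hl⟩
    rw [hTdef, Finset.mem_filter, Finset.mem_finsuppAntidiag] at hl
    obtain ⟨⟨hsum, hsup⟩, hmul⟩ := hl
    clear hinj
    set c := recoverD N l 0 2 0 hsup with hcdef
    set c' := recoverD N l 1 3 1 hsup with hc'def
    have hc0 : c 0 = 0 := recoverD_zero
    have hc'0 : c' 0 = 0 := recoverD_zero
    have claim : ∀ j ∈ J, av c c' j • dv j = l j := by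
      rintro ⟨i, t⟩ hj
      rw [hJdef, Finset.mem_product, Finset.mem_Icc] at hj
      obtain ⟨⟨hi1, hiN⟩, -⟩ := hj
      have hi1' : 1 ≤ i := hi1
      have hiN' : i ≤ N := hiN
      have hmem : ∀ t' : Fin 4, (i, t') ∈ J := fun t' => by
        rw [hJdef]
        exact Finset.mem_product.mpr ⟨Finset.mem_Icc.mpr ⟨hi1', hiN'⟩, Finset.mem_univ _⟩
      fin_cases t
      · show av c c' (i, 0) • dv (i, 0) = l (i, 0)
        obtain ⟨k, hk⟩ := hmul (i, (0 : Fin 4)) (hmem 0)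
        have hval : l (i, (0 : Fin 4)) 0 = k * i := by
          rw [← hk, Finsupp.smul_apply, smul_eq_mul]
          congr 1
          simp [dv, dA_apply0]
        have hc2i : av c c' (i, (0 : Fin 4)) = k := by
          show c (2 * i) = k
          rw [hcdef, recoverD_apply, if_pos (by omega), show 2 * i / 2 = i by omega, hval,
            Nat.mul_div_cancel _ (by omega)]
        rw [hc2i, hk]
      · show av c c' (i, 1) • dv (i, 1) = l (i, 1)
        obtain ⟨k, hk⟩ := hmul (i, (1 : Fin 4)) (hmem 1)
        have hval : l (i, (1 : Fin 4)) 0 = k * i := by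
          rw [← hk, Finsupp.smul_apply, smul_eq_mul]
          congr 1
          simp [dv, dA_apply0]
        have hc2i : av c c' (i, (1 : Fin 4)) = k := by
          show c' (2 * i) = k
          rw [hc'def, recoverD_apply, if_pos (by omega), show 2 * i / 2 = i by omega, hval,
            Nat.mul_div_cancel _ (by omega)]
        rw [hc2i, hk]
      · show av c c' (i, 2) • dv (i, 2) = l (i, 2)
        obtain ⟨k, hk⟩ := hmul (i, (2 : Fin 4)) (hmem 2)
        have hval : l (i, (2 : Fin 4)) 0 = k * i := by
          rw [← hk, Finsupp.smul_apply, smul_eq_mul]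
          congr 1
          simp [dv, dB_apply0]
        have hc2i : av c c' (i, (2 : Fin 4)) = k := by
          show c (2 * i - 1) = k
          rw [hcdef, recoverD_apply, if_neg (by omega), show (2 * i - 1 + 1) / 2 = i by omega,
            hval, Nat.mul_div_cancel _ (by omega)]
        rw [hc2i, hk]
      · show av c c' (i, 3) • dv (i, 3) = l (i, 3)
        obtain ⟨k, hk⟩ := hmul (i, (3 : Fin 4)) (hmem 3)
        have hval : l (i, (3 : Fin 4)) 1 = k * i := by
          rw [← hk, Finsupp.smul_apply, smul_eq_mul]
          congr 1
          simp [dv, dC_apply1]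
        have hc2i : av c c' (i, (3 : Fin 4)) = k := by
          show c' (2 * i - 1) = k
          rw [hc'def, recoverD_apply, if_neg (by omega), show (2 * i - 1 + 1) / 2 = i by omega,
            hval, Nat.mul_div_cancel _ (by omega)]
        rw [hc2i, hk]
    have hsum2 : Finsupp.single 0 (oW c + eW c') + Finsupp.single 1 (eW c + oW c') = E := by
      rw [← sum_av_dv N c c' Finsupp.support_onFinset_subset Finsupp.support_onFinset_subset]
      rw [Finset.sum_congr rfl claim]
      exact hsum
    have hm : oW c + eW c' = m := by
      have := DFunLike.congr_fun hsum2 0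
      simpa [hEdef, Finsupp.single_apply] using this
    have hn : eW c + oW c' = n := by
      have := DFunLike.congr_fun hsum2 1
      simpa [hEdef, Finsupp.single_apply] using this
    refine ⟨⟨(fromD c, fromD c'), ?_⟩, ?_⟩
    · constructor
      · show (fromD c).oddCols + (fromD c').evenCols = m
        rw [oddCols_eq, evenCols_eq, toD_fromD c hc0, toD_fromD c' hc'0]
        exact hm
      · show (fromD c).evenCols + (fromD c').oddCols = n
        rw [oddCols_eq, evenCols_eq, toD_fromD c hc0, toD_fromD c' hc'0]
        exact hn
    · apply Subtype.ext
      ext j : 1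
      show av (toD (fromD c)) (toD (fromD c')) j • dv j = l j
      have havj : av (toD (fromD c)) (toD (fromD c')) j = av c c' j := by
        rw [toD_fromD c hc0, toD_fromD c' hc'0]
      rw [havj]
      by_cases hj : j ∈ J
      · exact claim j hj
      · rw [Finsupp.notMem_support_iff.mp (fun hmem => hj (hsup hmem))]
        obtain ⟨i, t⟩ := j
        have hiJ : ¬(1 ≤ i ∧ i ≤ N) := by
          intro hi
          exact hj (by rw [hJdef, Finset.mem_product, Finset.mem_Icc]
                       exact ⟨hi, Finset.mem_univ _⟩)
        have hl0 : ∀ t' : Fin 4, l (i, t') = 0 := by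
          intro t'
          apply Finsupp.notMem_support_iff.mp
          intro hmem
          have := hsup hmem
          rw [hJdef, Finset.mem_product, Finset.mem_Icc] at this
          exact hiJ this.1
        have hav0 : av c c' (i, t) = 0 := by
          fin_cases t
          · show c (2 * i) = 0
            rw [hcdef, recoverD_apply, if_pos (by omega), show 2 * i / 2 = i by omega,
              hl0 0]
            simp
          · show c' (2 * i) = 0
            rw [hc'def, recoverD_apply, if_pos (by omega), show 2 * i / 2 = i by omega,
              hl0 1]
            simp
          · show c (2 * i - 1) = 0
            rcases Nat.eq_zero_or_pos i with rfl | hi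
            · simpa using hc0
            · rw [hcdef, recoverD_apply, if_neg (by omega),
                show (2 * i - 1 + 1) / 2 = i by omega, hl0 2]
              simp
          · show c' (2 * i - 1) = 0
            rcases Nat.eq_zero_or_pos i with rfl | hi
            · simpa using hc'0
            · rw [hc'def, recoverD_apply, if_neg (by omega),
                show (2 * i - 1 + 1) / 2 = i by omega, hl0 3]
              simp
        rw [hav0, zero_smul]
  rw [Nat.card_congr (Equiv.ofBijective F ⟨hinj, hsurj⟩), Nat.card_eq_finsetCard]
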